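/- If χ₁ and χ₂ are Gaussian pushforwards on a finite abelian group G, then their pointwise product g ↦ χ₁(g)·χ₂(g) is also a Gaussian pushforward on G. -/

import Mathlib

open scoped RealInnerProductSpace

/-- A function `χ : G → ℝ` on a finite abelian group is a *Gaussian pushforward* if
there is a lattice `L` (a discrete additive subgroup of a finite-dimensional real inner
product space) and a group homomorphism `h : L →+ G` such that for every `g`,
`χ g` is the (absolutely convergent) sum of `ρ x = exp (−π ⟨x, x⟩)` over `h ⁻¹ g`. -/
def IsGaussianPushforward {G : Type} [AddCommGroup G] (χ : G → ℝ) : Prop :=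
  ∃ (V : Type) (iN : NormedAddCommGroup V),
    letI := iN
    ∃ (iI : InnerProductSpace ℝ V),
      letI := iI
      FiniteDimensional ℝ V ∧
      ∃ (L : AddSubgroup V) (h : L →+ G),
        DiscreteTopology L ∧
        ∀ g : G, HasSum (fun x : {x : L // h x = g} =>
          Real.exp (-Real.pi * ⟪((x : L) : V), ((x : L) : V)⟫)) (χ g)

section Aux

variable {G : Type} [AddCommGroup G]
variable {V₁ V₂ : Type} [NormedAddCommGroup V₁] [InnerProductSpace ℝ V₁]
  [NormedAddCommGroup V₂] [InnerProductSpace ℝ V₂]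
variable (L₁ : AddSubgroup V₁) (L₂ : AddSubgroup V₂) (h₁ : L₁ →+ G) (h₂ : L₂ →+ G)

/-- The "fiber product" lattice inside the L²-product. -/
noncomputable def pairLat : AddSubgroup (WithLp 2 (V₁ × V₂)) where
  carrier := {p | ∃ (hx : p.ofLp.1 ∈ L₁) (hy : p.ofLp.2 ∈ L₂), h₁ ⟨p.ofLp.1, hx⟩ = h₂ ⟨p.ofLp.2, hy⟩}
  zero_mem' := ⟨L₁.zero_mem, L₂.zero_mem, by
    show h₁ (0 : L₁) = h₂ (0 : L₂); simp⟩
  add_mem' := by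
    rintro a b ⟨ha1, ha2, hae⟩ ⟨hb1, hb2, hbe⟩
    refine ⟨L₁.add_mem ha1 hb1, L₂.add_mem ha2 hb2, ?_⟩
    show h₁ (⟨a.ofLp.1, ha1⟩ + ⟨b.ofLp.1, hb1⟩) = h₂ (⟨a.ofLp.2, ha2⟩ + ⟨b.ofLp.2, hb2⟩)
    rw [map_add, map_add, hae, hbe]
  neg_mem' := by
    rintro a ⟨ha1, ha2, hae⟩
    refine ⟨L₁.neg_mem ha1, L₂.neg_mem ha2, ?_⟩
    show h₁ (-⟨a.ofLp.1, ha1⟩) = h₂ (-⟨a.ofLp.2, ha2⟩)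
    rw [map_neg, map_neg, hae]

/-- The homomorphism on the fiber product lattice. -/
noncomputable def pairHom : pairLat L₁ L₂ h₁ h₂ →+ G where
  toFun z := h₁ ⟨z.1.ofLp.1, z.2.choose⟩
  map_zero' := by show h₁ (0 : L₁) = 0; simp
  map_add' a b := by
    show h₁ (⟨a.1.ofLp.1, a.2.choose⟩ + ⟨b.1.ofLp.1, b.2.choose⟩) = _
    rw [map_add]

omit [InnerProductSpace ℝ V₁] [InnerProductSpace ℝ V₂] in
lemma pairHom_snd (z : pairLat L₁ L₂ h₁ h₂) :
    h₂ ⟨z.1.ofLp.2, z.2.choose_spec.choose⟩ = pairHom L₁ L₂ h₁ h₂ z :=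
  z.2.choose_spec.choose_spec.symm

def fiberEquiv (g : G) :
    {z : pairLat L₁ L₂ h₁ h₂ // pairHom L₁ L₂ h₁ h₂ z = g} ≃
      {x : L₁ // h₁ x = g} × {y : L₂ // h₂ y = g} where
  toFun z := (⟨⟨z.1.1.ofLp.1, z.1.2.choose⟩, z.2⟩,
    ⟨⟨z.1.1.ofLp.2, z.1.2.choose_spec.choose⟩, by
      rw [pairHom_snd]; exact z.2⟩)
  invFun p := ⟨⟨WithLp.toLp 2 (p.1.1.1, p.2.1.1), p.1.1.2, p.2.1.2, p.1.2.trans p.2.2.symm⟩, p.1.2⟩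
  left_inv z := rfl
  right_inv p := rfl

end Aux

/-- The pointwise product of two Gaussian pushforwards is a Gaussian pushforward. -/
theorem IsGaussianPushforward.mul
    {G : Type} [AddCommGroup G] {χ₁ χ₂ : G → ℝ}
    (h₁ : IsGaussianPushforward χ₁) (h₂ : IsGaussianPushforward χ₂) :
    IsGaussianPushforward (fun g => χ₁ g * χ₂ g) := by
  obtain ⟨V₁, iN₁, iI₁, hfd₁, L₁, f₁, hdisc₁, hsum₁⟩ := h₁
  obtain ⟨V₂, iN₂, iI₂, hfd₂, L₂, f₂, hdisc₂, hsum₂⟩ := h₂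
  refine ⟨WithLp 2 (V₁ × V₂), inferInstance, inferInstance, ?_,
    pairLat L₁ L₂ f₁ f₂, pairHom L₁ L₂ f₁ f₂, ?_, ?_⟩
  · exact Module.Finite.equiv (WithLp.linearEquiv 2 ℝ (V₁ × V₂)).symm
  · -- discreteness
    have hD : DiscreteTopology ↥((L₁ : Set V₁) ×ˢ (L₂ : Set V₂)) := by
      have : DiscreteTopology ↥(L₁ : Set V₁) := hdisc₁
      have : DiscreteTopology ↥(L₂ : Set V₂) := hdisc₂
      exact (Homeomorph.Set.prod _ _).isEmbedding.discreteTopology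
    have hemb : Topology.IsEmbedding
        (fun z : ↥(pairLat L₁ L₂ f₁ f₂) =>
          (WithLp.prodContinuousLinearEquiv 2 ℝ V₁ V₂).toHomeomorph z.1) :=
      (WithLp.prodContinuousLinearEquiv 2 ℝ V₁ V₂).toHomeomorph.isEmbedding.comp
        Topology.IsEmbedding.subtypeVal
    exact (hemb.codRestrict ((L₁ : Set V₁) ×ˢ (L₂ : Set V₂))
        (fun z => ⟨z.2.choose, z.2.choose_spec.choose⟩)).discreteTopology
  · intro g
    have H1 := hsum₁ g
    have H2 := hsum₂ g
    have Hs : Summable (fun p : {x : L₁ // f₁ x = g} × {y : L₂ // f₂ y = g} =>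
        Real.exp (-Real.pi * ⟪((p.1 : L₁) : V₁), ((p.1 : L₁) : V₁)⟫) *
        Real.exp (-Real.pi * ⟪((p.2 : L₂) : V₂), ((p.2 : L₂) : V₂)⟫)) :=
      H1.summable.mul_of_nonneg H2.summable
        (fun _ => (Real.exp_pos _).le) (fun _ => (Real.exp_pos _).le)
    have Hm := H1.mul H2 Hs
    refine ((fiberEquiv L₁ L₂ f₁ f₂ g).symm.hasSum_iff).mp ?_
    have hfe : ((fun x : {x : pairLat L₁ L₂ f₁ f₂ // pairHom L₁ L₂ f₁ f₂ x = g} =>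
          Real.exp (-Real.pi * ⟪((x : pairLat L₁ L₂ f₁ f₂) : WithLp 2 (V₁ × V₂)),
            ((x : pairLat L₁ L₂ f₁ f₂) : WithLp 2 (V₁ × V₂))⟫)) ∘
          (fiberEquiv L₁ L₂ f₁ f₂ g).symm) =
        (fun p : {x : L₁ // f₁ x = g} × {y : L₂ // f₂ y = g} =>
          Real.exp (-Real.pi * ⟪((p.1 : L₁) : V₁), ((p.1 : L₁) : V₁)⟫) *
          Real.exp (-Real.pi * ⟪((p.2 : L₂) : V₂), ((p.2 : L₂) : V₂)⟫)) := by
      funext p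
      simp only [Function.comp_apply]
      rw [WithLp.prod_inner_apply, ← Real.exp_add]
      congr 1
      show -Real.pi * (⟪((p.1 : L₁) : V₁), ((p.1 : L₁) : V₁)⟫ +
        ⟪((p.2 : L₂) : V₂), ((p.2 : L₂) : V₂)⟫) = _
      ring
    rw [hfe]
    exact Hm
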